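/- arXiv:2512.03321 — 3 statements merged into one kernel-verified Lean document; each statement's English description precedes it below -/
import Mathlib

section
/- Let Σ_ρ = (1-ρ)I_p + ρ·1_p 1_p^T with 0 ≤ ρ < 1 and S ⊆ {1,…,p} with |S| = s ≥ 1. For every v ∈ ℝ^p with ‖v_S‖₁ = 1, it holds that s·v^T Σ_ρ v ≥ 1 - ρ. In other words, the squared compatibility constant of Σ_ρ is at least 1 - ρ. -/
open Matrix BigOperators Finset

lemma quad_expand (p : ℕ) (ρ : ℝ) (v : Fin p → ℝ) :
    v ⬝ᵥ (((1 - ρ) • (1 : Matrix (Fin p) (Fin p) ℝ) +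
      ρ • Matrix.of (fun _ _ => (1 : ℝ))).mulVec v)
      = (1 - ρ) * ∑ i, (v i) ^ 2 + ρ * (∑ i, v i) ^ 2 := by
  simp only [dotProduct, Matrix.mulVec, Matrix.add_apply, Matrix.smul_apply,
    Matrix.one_apply, Matrix.of_apply, smul_eq_mul, mul_ite, mul_one, mul_zero,
    add_mul, ite_mul, zero_mul, Finset.sum_add_distrib, Finset.sum_ite_eq,
    Finset.mem_univ, if_true, mul_add]
  rw [Finset.mul_sum]
  congr 1
  · exact Finset.sum_congr rfl fun i _ => by rw [sq]; ring
  · rw [← Finset.sum_mul, ← Finset.mul_sum, sq]; ring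

theorem stmt_9 (p : ℕ) (hp : 1 ≤ p) (ρ : ℝ) (hρ0 : 0 ≤ ρ) (hρ1 : ρ < 1)
    (S : Finset (Fin p)) (hS : S.Nonempty) (s : ℕ) (hs : s = S.card)
    (v : Fin p → ℝ) (hv : (∑ j ∈ S, |v j|) = 1) :
    1 - ρ ≤ (s : ℝ) * (v ⬝ᵥ (((1 - ρ) • (1 : Matrix (Fin p) (Fin p) ℝ) +
        ρ • Matrix.of (fun _ _ => (1 : ℝ))).mulVec v)) := by
  rw [quad_expand]
  have hcs : (1 : ℝ) ≤ (s : ℝ) * ∑ i, (v i) ^ 2 := by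
    have h1 : (∑ j ∈ S, |v j|) ^ 2 ≤ (S.card : ℝ) * ∑ j ∈ S, |v j| ^ 2 :=
      sq_sum_le_card_mul_sum_sq
    have h2 : ∑ j ∈ S, |v j| ^ 2 ≤ ∑ i, (v i) ^ 2 := by
      rw [show (∑ j ∈ S, |v j| ^ 2) = ∑ j ∈ S, (v j) ^ 2 from
        Finset.sum_congr rfl fun j _ => sq_abs _]
      exact Finset.sum_le_sum_of_subset_of_nonneg (Finset.subset_univ S)
        (fun i _ _ => sq_nonneg _)
    calc (1 : ℝ) = (∑ j ∈ S, |v j|) ^ 2 := by rw [hv]; ring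
      _ ≤ (S.card : ℝ) * ∑ j ∈ S, |v j| ^ 2 := h1
      _ ≤ (s : ℝ) * ∑ i, (v i) ^ 2 := by
          rw [hs]; exact mul_le_mul_of_nonneg_left h2 (Nat.cast_nonneg _)
  have h3 : 0 ≤ (s : ℝ) * (ρ * (∑ i, v i) ^ 2) := by positivity
  nlinarith [hcs, h3, sub_nonneg.mpr hρ1.le]
end

section
/- Let Σ_ρ = (1-ρ)I_p + ρ·1_p 1_p^T with 0 ≤ ρ < 1 and let S ⊆ {1,…,p} have even cardinality s ≥ 2. Then there exists v ∈ ℝ^p with ‖v_S‖₁ = 1, ‖v_{S^c}‖₁ ≤ 3, and s·v^T Σ_ρ v = 1 - ρ. Combined with the lower bound, the squared compatibility constant equals exactly 1 - ρ when s is even. -/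
open Matrix BigOperators Finset

lemma quad_eq (p : ℕ) (ρ : ℝ) (v : Fin p → ℝ) :
    v ⬝ᵥ (((1 - ρ) • (1 : Matrix (Fin p) (Fin p) ℝ) +
      ρ • Matrix.of (fun _ _ => (1 : ℝ))).mulVec v)
    = (1 - ρ) * (∑ i, v i ^ 2) + ρ * (∑ i, v i) ^ 2 := by
  have hmv : ∀ i, (((1 - ρ) • (1 : Matrix (Fin p) (Fin p) ℝ) +
      ρ • Matrix.of (fun _ _ => (1 : ℝ))).mulVec v) i
      = (1 - ρ) * v i + ρ * ∑ j, v j := by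
    intro i
    simp [Matrix.mulVec, dotProduct, Matrix.one_apply, Matrix.add_apply,
      add_mul, Finset.sum_add_distrib, ite_mul, Finset.mul_sum]
  simp only [dotProduct, hmv]
  have : ∀ i ∈ (Finset.univ : Finset (Fin p)),
      v i * ((1 - ρ) * v i + ρ * ∑ j, v j)
      = (1 - ρ) * v i ^ 2 + ρ * (∑ j, v j) * v i := by intro i _; ring
  rw [Finset.sum_congr rfl this, Finset.sum_add_distrib, ← Finset.mul_sum, ← Finset.mul_sum]
  ring

lemma lower_bound (p : ℕ) (ρ : ℝ) (hρ0 : 0 ≤ ρ) (hρ1 : ρ < 1)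
    (S : Finset (Fin p)) (s : ℕ) (hs : s = S.card)
    (v : Fin p → ℝ) (hv1 : (∑ j ∈ S, |v j|) = 1) :
    1 - ρ ≤ (s : ℝ) * (v ⬝ᵥ (((1 - ρ) • (1 : Matrix (Fin p) (Fin p) ℝ) +
      ρ • Matrix.of (fun _ _ => (1 : ℝ))).mulVec v)) := by
  rw [quad_eq]
  have h1 : (1 : ℝ) ≤ (s : ℝ) * ∑ i, v i ^ 2 := by
    have hcs := sq_sum_le_card_mul_sum_sq (s := S) (f := fun j => |v j|)
    have h2 : ∑ j ∈ S, |v j| ^ 2 ≤ ∑ i, v i ^ 2 := by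
      refine Finset.sum_le_sum_of_subset_of_nonneg (Finset.subset_univ S) ?_ |>.trans_eq ?_
      · intro i _ _; positivity
      · exact Finset.sum_congr rfl fun i _ => sq_abs (v i)
    rw [hv1] at hcs
    have : (S.card : ℝ) * ∑ j ∈ S, |v j| ^ 2 ≤ (s : ℝ) * ∑ i, v i ^ 2 := by
      rw [hs]; exact mul_le_mul_of_nonneg_left h2 (by positivity)
    calc (1:ℝ) = 1 ^ 2 := by ring
      _ ≤ (S.card : ℝ) * ∑ j ∈ S, |v j| ^ 2 := by exact_mod_cast hcs
      _ ≤ _ := this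
  have h3 : (0:ℝ) ≤ (s : ℝ) * (ρ * (∑ i, v i) ^ 2) := by positivity
  nlinarith [h1, h3, sub_nonneg.mpr hρ1.le]

theorem stmt_10 (p : ℕ) (hp : 2 ≤ p) (ρ : ℝ) (hρ0 : 0 ≤ ρ) (hρ1 : ρ < 1)
    (S : Finset (Fin p)) (s : ℕ) (hs : s = S.card) (hse : Even s)
    (hs2 : 2 ≤ s) :
    (∃ v : Fin p → ℝ, (∑ j ∈ S, |v j|) = 1 ∧ (∑ j ∈ Sᶜ, |v j|) ≤ 3 ∧
        (s : ℝ) * (v ⬝ᵥ (((1 - ρ) • (1 : Matrix (Fin p) (Fin p) ℝ) +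
          ρ • Matrix.of (fun _ _ => (1 : ℝ))).mulVec v)) = 1 - ρ) ∧
    sInf ((fun v : Fin p → ℝ =>
        (s : ℝ) * (v ⬝ᵥ (((1 - ρ) • (1 : Matrix (Fin p) (Fin p) ℝ) +
          ρ • Matrix.of (fun _ _ => (1 : ℝ))).mulVec v))) ''
        {v | (∑ j ∈ S, |v j|) = 1 ∧ (∑ j ∈ Sᶜ, |v j|) ≤ 3}) = 1 - ρ := by
  have hspos : (0:ℝ) < (s:ℝ) := by positivity
  -- construct T ⊆ S with card s/2
  obtain ⟨T, hTS, hTcard⟩ : ∃ T ⊆ S, T.card = s / 2 :=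
    Finset.exists_subset_card_eq (by omega)
  set v : Fin p → ℝ := fun j => if j ∈ T then (s : ℝ)⁻¹ else if j ∈ S then -(s : ℝ)⁻¹ else 0
    with hvdef
  obtain ⟨k, hk⟩ := hse
  have hks : s = 2 * k := by omega
  have hk2 : s / 2 = k := by omega
  have habs : ∀ j ∈ S, |v j| = (s : ℝ)⁻¹ := by
    intro j hj
    by_cases h : j ∈ T <;> simp [hvdef, h, hj, abs_of_nonneg, hspos.le, abs_neg]
  have hv1 : (∑ j ∈ S, |v j|) = 1 := by
    rw [Finset.sum_congr rfl habs, Finset.sum_const, ← hs, nsmul_eq_mul]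
    field_simp
  have hvc : ∀ j ∈ Sᶜ, v j = 0 := by
    intro j hj
    rw [Finset.mem_compl] at hj
    have hjT : j ∉ T := fun h => hj (hTS h)
    simp [hvdef, hjT, hj]
  have hv2 : (∑ j ∈ Sᶜ, |v j|) = 0 := by
    refine Finset.sum_eq_zero fun j hj => by rw [hvc j hj]; simp
  have hsumv : (∑ i, v i) = 0 := by
    rw [← Finset.sum_add_sum_compl S]
    have hS : (∑ j ∈ S, v j) = 0 := by
      rw [← Finset.sum_sdiff hTS]
      have h1 : (∑ j ∈ S \ T, v j) = (S \ T).card * (-(s:ℝ)⁻¹) := by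
        rw [Finset.sum_congr rfl (fun j hj => ?_), Finset.sum_const, nsmul_eq_mul]
        have := Finset.mem_sdiff.mp hj
        simp [hvdef, this.2, this.1]
      have h2 : (∑ j ∈ T, v j) = T.card * (s:ℝ)⁻¹ := by
        rw [Finset.sum_congr rfl (fun j hj => ?_), Finset.sum_const, nsmul_eq_mul]
        simp [hvdef, hj]
      have hcard : (S \ T).card = k := by
        rw [Finset.card_sdiff_of_subset hTS, ← hs, hTcard]; omega
      rw [h1, h2, hcard, hTcard, hk2]
      ring
    rw [hS, Finset.sum_eq_zero hvc, add_zero]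
  have hsq : (∑ i, v i ^ 2) = (s : ℝ)⁻¹ := by
    rw [← Finset.sum_add_sum_compl S]
    have hc : (∑ j ∈ Sᶜ, v j ^ 2) = 0 :=
      Finset.sum_eq_zero fun j hj => by rw [hvc j hj]; ring
    have hSsq : (∑ j ∈ S, v j ^ 2) = S.card * ((s:ℝ)⁻¹)^2 := by
      rw [Finset.sum_congr rfl (fun j hj => ?_), Finset.sum_const, nsmul_eq_mul]
      rw [← sq_abs, habs j hj]
    rw [hc, hSsq, ← hs, add_zero]
    field_simp
  have hval : (s : ℝ) * (v ⬝ᵥ (((1 - ρ) • (1 : Matrix (Fin p) (Fin p) ℝ) +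
      ρ • Matrix.of (fun _ _ => (1 : ℝ))).mulVec v)) = 1 - ρ := by
    rw [quad_eq, hsq, hsumv]
    field_simp
    ring
  refine ⟨⟨v, hv1, by rw [hv2]; norm_num, hval⟩, ?_⟩
  apply le_antisymm
  · exact csInf_le ⟨1 - ρ, fun x ⟨w, hw, hwx⟩ => hwx ▸ lower_bound p ρ hρ0 hρ1 S s hs w hw.1⟩
      ⟨v, ⟨hv1, by rw [hv2]; norm_num⟩, hval⟩
  · exact le_csInf ⟨_, ⟨v, ⟨hv1, by rw [hv2]; norm_num⟩, hval⟩⟩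
      fun x ⟨w, hw, hwx⟩ => hwx ▸ lower_bound p ρ hρ0 hρ1 S s hs w hw.1
end

section
/- Let Σ_ρ = (1-ρ)I_p + ρ·1_p 1_p^T with 0 ≤ ρ < 1 and let S ⊆ {1,…,p} have odd cardinality s ≥ 1 with r := p - s ≥ 1. Then there exists v ∈ ℝ^p with ‖v_S‖₁ = 1, ‖v_{S^c}‖₁ ≤ 3, and s·v^T Σ_ρ v = (1-ρ)(1 + 1/(s r)). Hence the squared compatibility constant satisfies φ² ≤ (1-ρ)(1 + 1/(s r)). -/
open Matrix BigOperators Finset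

lemma quadform {p : ℕ} (ρ : ℝ) (v : Fin p → ℝ) :
    v ⬝ᵥ (((1 - ρ) • (1 : Matrix (Fin p) (Fin p) ℝ) +
      ρ • Matrix.of (fun _ _ => (1 : ℝ))).mulVec v)
    = (1 - ρ) * ∑ i, (v i)^2 + ρ * (∑ i, v i)^2 := by
  have h1 : ∀ i : Fin p, ((Matrix.of (fun (_ _ : Fin p) => (1:ℝ))).mulVec v) i = ∑ j, v j := by
    intro i; simp [Matrix.mulVec, dotProduct]
  simp only [Matrix.add_mulVec, Matrix.smul_mulVec, Matrix.one_mulVec,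
    dotProduct_add, dotProduct_smul, smul_eq_mul]
  congr 1
  · simp [dotProduct, sq, smul_eq_mul, Pi.smul_apply, Finset.mul_sum]
  · simp only [dotProduct, h1, sq]
    rw [← Finset.sum_mul]

theorem stmt_11 (p : ℕ) (ρ : ℝ) (hρ0 : 0 ≤ ρ) (hρ1 : ρ < 1)
    (S : Finset (Fin p)) (s : ℕ) (hs : s = S.card) (hso : Odd s)
    (hs1 : 1 ≤ s) (r : ℕ) (hr : r = p - s) (hr1 : 1 ≤ r) (hps : s < p) :
    (∃ v : Fin p → ℝ, (∑ j ∈ S, |v j|) = 1 ∧ (∑ j ∈ Sᶜ, |v j|) ≤ 3 ∧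
        (s : ℝ) * (v ⬝ᵥ (((1 - ρ) • (1 : Matrix (Fin p) (Fin p) ℝ) +
          ρ • Matrix.of (fun _ _ => (1 : ℝ))).mulVec v)) =
          (1 - ρ) * (1 + 1 / ((s : ℝ) * r))) ∧
    sInf ((fun v : Fin p → ℝ =>
        (s : ℝ) * (v ⬝ᵥ (((1 - ρ) • (1 : Matrix (Fin p) (Fin p) ℝ) +
          ρ • Matrix.of (fun _ _ => (1 : ℝ))).mulVec v))) ''
        {v | (∑ j ∈ S, |v j|) = 1 ∧ (∑ j ∈ Sᶜ, |v j|) ≤ 3}) ≤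
      (1 - ρ) * (1 + 1 / ((s : ℝ) * r)) := by
  obtain ⟨k, hk⟩ := hso
  have hs0 : (0:ℝ) < (s:ℝ) := by exact_mod_cast hs1
  have hr0 : (0:ℝ) < (r:ℝ) := by exact_mod_cast hr1
  obtain ⟨A, hAS, hA⟩ := Finset.exists_subset_card_eq (s := S) (n := k+1) (by omega)
  set v : Fin p → ℝ := fun j =>
    if j ∈ A then 1/(s:ℝ) else if j ∈ S then -(1/(s:ℝ)) else -(1/((s:ℝ)*(r:ℝ))) with hv
  -- card facts
  have hScard : Sᶜ.card = r := by
    rw [Finset.card_compl]; simp [← hs, hr]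
  have hSA : (S \ A).card = k := by
    rw [Finset.card_sdiff_of_subset hAS, hA]; omega
  -- L1 norm on S
  have h1 : (∑ j ∈ S, |v j|) = 1 := by
    have : ∀ j ∈ S, |v j| = 1/(s:ℝ) := by
      intro j hj
      by_cases hjA : j ∈ A <;> simp [hv, hjA, hj, abs_of_pos, abs_of_nonneg, hs0.le,
        one_div_nonneg, abs_neg]
    rw [Finset.sum_congr rfl this, Finset.sum_const, ← hs, nsmul_eq_mul]
    field_simp
  -- L1 norm on Sᶜ
  have hvc : ∀ j ∈ Sᶜ, v j = -(1/((s:ℝ)*(r:ℝ))) := by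
    intro j hj
    rw [Finset.mem_compl] at hj
    have hjA : j ∉ A := fun h => hj (hAS h)
    simp [hv, hjA, hj]
  have h2 : (∑ j ∈ Sᶜ, |v j|) ≤ 3 := by
    have : ∀ j ∈ Sᶜ, |v j| = 1/((s:ℝ)*(r:ℝ)) := by
      intro j hj
      rw [hvc j hj, abs_neg, abs_of_nonneg (by positivity)]
    rw [Finset.sum_congr rfl this, Finset.sum_const, hScard, nsmul_eq_mul]
    rw [mul_one_div, div_le_iff₀ (by positivity)]
    have hs1' : (1:ℝ) ≤ (s:ℝ) := by exact_mod_cast hs1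
    nlinarith [mul_le_mul_of_nonneg_right hs1' hr0.le]
  -- sum of v = 0
  have hsumS : (∑ j ∈ S, v j) = 1/(s:ℝ) := by
    rw [← Finset.sum_sdiff hAS]
    have hA' : ∀ j ∈ A, v j = 1/(s:ℝ) := by intro j hj; simp [hv, hj]
    have hSA' : ∀ j ∈ S \ A, v j = -(1/(s:ℝ)) := by
      intro j hj
      rw [Finset.mem_sdiff] at hj
      simp [hv, hj.1, hj.2]
    rw [Finset.sum_congr rfl hA', Finset.sum_congr rfl hSA', Finset.sum_const,
      Finset.sum_const, hSA, hA, nsmul_eq_mul, nsmul_eq_mul]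
    push_cast
    field_simp
    ring
  have hsum : (∑ j, v j) = 0 := by
    rw [← Finset.sum_add_sum_compl S, hsumS, Finset.sum_congr rfl hvc,
      Finset.sum_const, hScard, nsmul_eq_mul]
    field_simp
    ring
  -- sum of squares
  have hsq : (∑ j, (v j)^2) = 1/(s:ℝ) + 1/((s:ℝ)^2*(r:ℝ)) := by
    rw [← Finset.sum_add_sum_compl S]
    have hS' : ∀ j ∈ S, (v j)^2 = 1/(s:ℝ)^2 := by
      intro j hj
      by_cases hjA : j ∈ A <;> simp [hv, hjA, hj, div_pow, neg_sq]
    have hSc' : ∀ j ∈ Sᶜ, (v j)^2 = 1/((s:ℝ)*(r:ℝ))^2 := by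
      intro j hj; rw [hvc j hj, neg_sq, div_pow, one_pow]
    rw [Finset.sum_congr rfl hS', Finset.sum_congr rfl hSc', Finset.sum_const,
      Finset.sum_const, ← hs, hScard, nsmul_eq_mul, nsmul_eq_mul]
    field_simp
  have hval : (s : ℝ) * (v ⬝ᵥ (((1 - ρ) • (1 : Matrix (Fin p) (Fin p) ℝ) +
          ρ • Matrix.of (fun _ _ => (1 : ℝ))).mulVec v)) =
          (1 - ρ) * (1 + 1 / ((s : ℝ) * r)) := by
    rw [quadform, hsq, hsum]
    field_simp
    ring
  refine ⟨⟨v, h1, h2, hval⟩, ?_⟩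
  apply csInf_le
  · refine ⟨0, fun x hx => ?_⟩
    obtain ⟨w, _, rfl⟩ := hx
    dsimp only
    rw [quadform]
    have h01 : (0:ℝ) ≤ 1 - ρ := by linarith
    positivity
  · exact ⟨v, ⟨h1, h2⟩, hval⟩
end
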